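/- Let X be a Banach space, A a bounded linear operator on X with sup_{n∈ℕ} ‖A^n‖_μ = ∞ (in particular, this holds if the essential spectral radius r_e(A) > 1), let (K_n)_{n≥1} be compact maps on X, and define f_n(x) = (A + K_n)⋯(A + K_1)x. Then the set {x ∈ X : sup_{n∈ℕ} ‖f_n(x)‖ = ∞} is residual in X. -/

import Mathlib

/-- The μ-measure of non-compactness of a bounded operator. -/
noncomputable def muNorm {X : Type*} [NormedAddCommGroup X] [NormedSpace ℂ X]
    (A : X →L[ℂ] X) : ℝ :=
  sInf {c : ℝ | ∃ M : Submodule ℂ X, IsClosed (M : Set X) ∧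
    FiniteDimensional ℂ (X ⧸ M) ∧ c = ‖A.comp M.subtypeL‖}

open Metric Set Pointwise

lemma muNorm_le_of_ball_add_compact {X : Type*} [NormedAddCommGroup X] [NormedSpace ℂ X]
    [Nontrivial X]
    (T : X →L[ℂ] X) {r ρ : ℝ} (hr : 0 ≤ r) (hρ : 0 < ρ) {D : Set X} (hD : IsCompact D)
    (hT : ∀ h : X, ‖h‖ ≤ ρ → T h ∈ Metric.closedBall (0 : X) r + D) :
    muNorm T ≤ (4 * r + 4) / ρ := by
  obtain ⟨t, htfin, htD⟩ := (totallyBounded_iff.mp hD.totallyBounded) 1 one_pos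
  letI : Fintype t := htfin.fintype
  choose g hg1 hg2 using fun c : t => exists_dual_vector' ℂ (c : X)
  set Φ : X →L[ℂ] (t → ℂ) := ContinuousLinearMap.pi (fun c => (g c).comp T) with hΦ
  set M : Submodule ℂ X := LinearMap.ker (Φ : X →ₗ[ℂ] (t → ℂ)) with hM
  have hMclosed : IsClosed (M : Set X) := ContinuousLinearMap.isClosed_ker Φ
  have hMfd : FiniteDimensional ℂ (X ⧸ M) := by
    have e := (Φ : X →ₗ[ℂ] (t → ℂ)).quotKerEquivRange
    have : FiniteDimensional ℂ ↥(LinearMap.range (Φ : X →ₗ[ℂ] (t → ℂ))) := inferInstance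
    exact Module.Finite.equiv e.symm
  -- pointwise bound on M
  have key : ∀ x ∈ M, ‖x‖ ≤ ρ → ‖T x‖ ≤ 2 * r + 2 := by
    intro x hx hxρ
    obtain ⟨u, hu, d, hd, hud⟩ := Set.mem_add.mp (hT x hxρ)
    have hu' : ‖u‖ ≤ r := by simpa [mem_closedBall_zero_iff] using hu
    obtain ⟨c, hct, hc⟩ := Set.mem_iUnion₂.mp (htD hd)
    have hdc : ‖d - c‖ < 1 := by rwa [mem_ball, dist_eq_norm] at hc
    have hgc0 : g ⟨c, hct⟩ (T x) = 0 := by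
      have : Φ x = 0 := hx
      have := congrFun this ⟨c, hct⟩
      simpa [Φ] using this
    set φ := g ⟨c, hct⟩
    have hφnorm : ‖φ‖ = 1 := hg1 _
    have hφle : ∀ y : X, ‖φ y‖ ≤ ‖y‖ := by
      intro y
      calc ‖φ y‖ ≤ ‖φ‖ * ‖y‖ := φ.le_opNorm y
        _ = ‖y‖ := by rw [hφnorm, one_mul]
    have hφd : ‖φ d‖ ≤ r := by
      have : φ d = - φ u := by
        have : φ u + φ d = 0 := by rw [← map_add, hud, hgc0]
        linear_combination this
      rw [this, norm_neg]
      exact (hφle u).trans hu'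
    have hcnorm : ‖c‖ ≤ 1 + r := by
      have h1 : (‖c‖ : ℂ) = φ c := (hg2 ⟨c, hct⟩).symm
      have h2 : ‖c‖ = ‖φ c‖ := by
        rw [← h1]; simp [Complex.norm_real, abs_of_nonneg (norm_nonneg c)]
      calc ‖c‖ = ‖φ c‖ := h2
        _ = ‖φ (c - d) + φ d‖ := by rw [← map_add, sub_add_cancel]
        _ ≤ ‖φ (c - d)‖ + ‖φ d‖ := norm_add_le _ _
        _ ≤ ‖c - d‖ + r := add_le_add (hφle _) hφd
        _ ≤ 1 + r := by
            have : ‖c - d‖ < 1 := by rwa [norm_sub_rev] at hdc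
            linarith
    have hdnorm : ‖d‖ ≤ r + 2 := by
      calc ‖d‖ = ‖(d - c) + c‖ := by rw [sub_add_cancel]
        _ ≤ ‖d - c‖ + ‖c‖ := norm_add_le _ _
        _ ≤ r + 2 := by linarith
    calc ‖T x‖ = ‖u + d‖ := by rw [hud]
      _ ≤ ‖u‖ + ‖d‖ := norm_add_le _ _
      _ ≤ 2 * r + 2 := by linarith
  -- operator norm bound on the restriction
  set S : M →L[ℂ] X := T.comp M.subtypeL with hS
  have hC : (0:ℝ) ≤ (4 * r + 4) / ρ := by positivity
  have hSnorm : ‖S‖ ≤ (4 * r + 4) / ρ := by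
    refine ContinuousLinearMap.opNorm_le_of_shell (ε := ρ) hρ hC
      (c := (2:ℂ)) (by norm_num) ?_
    intro x hx1 hx2
    have hx1' : ρ / 2 ≤ ‖x‖ := by simpa using hx1
    have : ‖T (x : X)‖ ≤ 2 * r + 2 := key x x.2 (le_of_lt (by simpa using hx2))
    calc ‖S x‖ = ‖T (x : X)‖ := rfl
      _ ≤ 2 * r + 2 := this
      _ ≤ (4 * r + 4) / ρ * (ρ / 2) := by
          have hq : (4 * r + 4) / ρ * (ρ / 2) = 2 * r + 2 := by
            field_simp; ring
          rw [hq]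
      _ ≤ (4 * r + 4) / ρ * ‖x‖ := by
          apply mul_le_mul_of_nonneg_left hx1' hC
  refine le_trans (csInf_le ?_ ?_) hSnorm
  · exact ⟨0, fun c hc => by obtain ⟨M', _, _, rfl⟩ := hc; exact ContinuousLinearMap.opNorm_nonneg _⟩
  · exact ⟨M, hMclosed, hMfd, rfl⟩


/-- If `sup_n ‖Aⁿ‖_μ = ∞`, then the set of initial data with unbounded nonlinear orbit
is residual. -/
theorem stmt_7 (X : Type*) [NormedAddCommGroup X] [NormedSpace ℂ X] [CompleteSpace X]
    (hX : ¬ FiniteDimensional ℂ X)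
    (A : X →L[ℂ] X)
    (hA : ¬ BddAbove (Set.range fun n : ℕ => muNorm (A ^ n)))
    (K : ℕ → X → X)
    (hK : ∀ j, 1 ≤ j → Continuous (K j) ∧
      ∀ B : Set X, Bornology.IsBounded B → IsCompact (closure (K j '' B)))
    (f : ℕ → X → X) (hf0 : ∀ x, f 0 x = x)
    (hfs : ∀ j x, f (j + 1) x = A (f j x) + K (j + 1) (f j x)) :
    {x : X | ¬ BddAbove (Set.range fun n : ℕ => ‖f n x‖)} ∈ residual X := by
  haveI : Nontrivial X := by
    rcases subsingleton_or_nontrivial X with h | h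
    · exact (hX inferInstance).elim
    · exact h
  -- continuity of the iterates
  have hfc : ∀ n, Continuous (f n) := by
    intro n
    induction n with
    | zero =>
      have : f 0 = id := funext hf0
      rw [this]; exact continuous_id
    | succ n ih =>
      have : f (n + 1) = fun x => A (f n x) + K (n + 1) (f n x) := funext (hfs n)
      rw [this]
      exact (A.continuous.comp ih).add ((hK (n + 1) (by omega)).1.comp ih)
  -- the open sets
  set U : ℕ → Set X := fun m => {x | ∃ n, (m : ℝ) < ‖f n x‖} with hU
  have hUopen : ∀ m, IsOpen (U m) := by
    intro m
    have : U m = ⋃ n, {x | (m : ℝ) < ‖f n x‖} := by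
      ext x; simp [hU, Set.mem_iUnion]
    rw [this]
    exact isOpen_iUnion fun n => isOpen_lt continuous_const (hfc n).norm
  -- density
  have hUdense : ∀ m, Dense (U m) := by
    intro m
    by_contra hnd
    rw [Metric.dense_iff] at hnd
    push_neg at hnd
    obtain ⟨x₀, ε, hε, hempty⟩ := hnd
    have hball : ∀ y ∈ Metric.ball x₀ ε, ∀ n, ‖f n y‖ ≤ (m : ℝ) := by
      intro y hy n
      by_contra hgt
      push_neg at hgt
      have : y ∈ Metric.ball x₀ ε ∩ U m := ⟨hy, ⟨n, hgt⟩⟩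
      rw [hempty] at this
      exact this
    -- compact remainders
    have hrem : ∀ n, ∃ C : Set X, IsCompact C ∧
        ∀ y ∈ Metric.closedBall x₀ (ε / 2), f n y - (A ^ n) y ∈ C := by
      intro n
      induction n with
      | zero =>
        exact ⟨{0}, isCompact_singleton, fun y _ => by
          simp [hf0, pow_zero, ContinuousLinearMap.one_apply]⟩
      | succ n ih =>
        obtain ⟨C, hC, hCmem⟩ := ih
        refine ⟨A '' C + closure (K (n + 1) '' Metric.closedBall 0 (m : ℝ)), ?_, ?_⟩
        · exact (hC.image A.continuous).add
            ((hK (n + 1) (by omega)).2 _ Metric.isBounded_closedBall)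
        · intro y hy
          have hy' : y ∈ Metric.ball x₀ ε :=
            Metric.closedBall_subset_ball (by linarith) hy
          have h1 : f n y ∈ Metric.closedBall (0 : X) (m : ℝ) :=
            mem_closedBall_zero_iff.mpr (hball y hy' n)
          have heq : f (n + 1) y - (A ^ (n + 1)) y
              = A (f n y - (A ^ n) y) + K (n + 1) (f n y) := by
            rw [hfs n y, pow_succ', ContinuousLinearMap.mul_apply, map_sub]
            abel
          rw [heq]
          exact Set.add_mem_add (Set.mem_image_of_mem _ (hCmem y hy))
            (subset_closure (Set.mem_image_of_mem _ h1))
    -- uniform bound on muNorm (A ^ n)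
    have hbound : ∀ n : ℕ, muNorm (A ^ n) ≤ (4 * (2 * (m : ℝ)) + 4) / (ε / 2) := by
      intro n
      obtain ⟨C, hC, hmem⟩ := hrem n
      refine muNorm_le_of_ball_add_compact (A ^ n) (r := 2 * (m : ℝ)) (by positivity)
        (half_pos hε) (D := C + -C) (hC.add hC.neg) ?_
      intro h hh
      have hx1 : x₀ + h ∈ Metric.closedBall x₀ (ε / 2) := by
        rw [Metric.mem_closedBall, dist_eq_norm]
        simpa using hh
      have hx2 : x₀ ∈ Metric.closedBall x₀ (ε / 2) :=
        Metric.mem_closedBall_self (by linarith)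
      have hx1' : x₀ + h ∈ Metric.ball x₀ ε := Metric.closedBall_subset_ball (by linarith) hx1
      have hx2' : x₀ ∈ Metric.ball x₀ ε := Metric.closedBall_subset_ball (by linarith) hx2
      have hu : f n (x₀ + h) - f n x₀ ∈ Metric.closedBall (0 : X) (2 * (m : ℝ)) := by
        rw [mem_closedBall_zero_iff]
        calc ‖f n (x₀ + h) - f n x₀‖ ≤ ‖f n (x₀ + h)‖ + ‖f n x₀‖ := norm_sub_le _ _
          _ ≤ 2 * (m : ℝ) := by
              have := hball _ hx1' n
              have := hball _ hx2' n
              linarith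
      have hd : (f n x₀ - (A ^ n) x₀) + -(f n (x₀ + h) - (A ^ n) (x₀ + h)) ∈ C + -C :=
        Set.add_mem_add (hmem _ hx2) (Set.neg_mem_neg.mpr (hmem _ hx1))
      have key : (f n (x₀ + h) - f n x₀)
          + ((f n x₀ - (A ^ n) x₀) + -(f n (x₀ + h) - (A ^ n) (x₀ + h)))
          = (A ^ n) h := by
        rw [map_add]; abel
      exact key ▸ Set.add_mem_add hu hd
    exact hA ⟨(4 * (2 * (m : ℝ)) + 4) / (ε / 2), by
      rintro y ⟨n, rfl⟩; exact hbound n⟩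
  -- conclude
  have hres : (⋂ m : ℕ, U m) ∈ residual X :=
    (countable_iInter_mem.mpr fun m => residual_of_dense_open (hUopen m) (hUdense m))
  refine Filter.mem_of_superset hres ?_
  intro x hx
  rw [Set.mem_iInter] at hx
  rintro ⟨b, hb⟩
  obtain ⟨m, hm⟩ := exists_nat_ge b
  obtain ⟨n, hn⟩ := hx m
  have : ‖f n x‖ ≤ b := hb ⟨n, rfl⟩
  linarith
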